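/- Let γ > 0 and u'(x) = x^{−γ} on (0,∞). Then for any w > 0 and any finite-state specification (π_n, β_n, R_n, Y_n) with all entries positive, the function g(s) = (Σ_n π_n β_n R_n (R_n s + Y_n)^{−γ})^{−1/γ}, defined for s > −min_n Y_n/R_n, is concave, and consequently the consumption function c(w) defined by the Euler equation u'(c(w)) = Σ_n π_n β_n R_n u'(R_n s(w) + Y_n) with c(w) + s(w) = w is concave in w. -/

import Mathlib

private lemma sum_pos'' {N : ℕ} (hN : 0 < N) {f : Fin N → ℝ} (hf : ∀ n, 0 < f n) :
    0 < ∑ n, f n := by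
  haveI : Nonempty (Fin N) := Fin.pos_iff_nonempty.mp hN
  exact Finset.sum_pos (fun n _ => hf n) Finset.univ_nonempty

private lemma tangent_le {γ : ℝ} (hγ : 0 < γ) {N : ℕ} (hN : 0 < N)
    (a x y : Fin N → ℝ) (ha : ∀ n, 0 < a n) (hx : ∀ n, 0 < x n) (hy : ∀ n, 0 < y n) :
    (∑ n, a n * x n ^ (-γ)) ^ (-1/γ) ≤
      (∑ n, a n * y n ^ (-γ)) ^ (-(γ+1)/γ) * ∑ n, a n * y n ^ (-γ-1) * x n := by
  have hγ' : γ ≠ 0 := hγ.ne'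
  set p : ℝ := (γ+1)/γ with hp
  set q : ℝ := γ+1 with hq
  have hq0 : 0 < q := by rw [hq]; linarith
  have hp0 : 0 < p := by rw [hp]; positivity
  have hpq : Real.HolderConjugate p q := by
    rw [Real.holderConjugate_iff]; constructor
    · rw [hp, lt_div_iff₀ hγ]; linarith
    · rw [hp, hq, inv_div]; field_simp
  set Sx := ∑ n, a n * x n ^ (-γ) with hSx
  set Sy := ∑ n, a n * y n ^ (-γ) with hSy
  set T := ∑ n, a n * y n ^ (-γ-1) * x n with hT
  have hSxpos : 0 < Sx := sum_pos'' hN fun n => by have := hx n; have := ha n; positivity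
  have hSypos : 0 < Sy := sum_pos'' hN fun n => by have := hy n; have := ha n; positivity
  have hTpos : 0 < T := sum_pos'' hN fun n => by have := hx n; have := hy n; have := ha n; positivity
  -- Hölder step
  have key : Sy ≤ T ^ (1/p) * Sx ^ (1/q) := by
    have h := Real.inner_le_Lp_mul_Lq_of_nonneg (s := Finset.univ)
      (f := fun n => (a n * y n ^ (-γ-1) * x n) ^ (1/p))
      (g := fun n => (a n * x n ^ (-γ)) ^ (1/q)) hpq
      (fun i _ => by have := hx i; have := hy i; have := ha i; positivity)
      (fun i _ => by have := hx i; have := ha i; positivity)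
    have e1 : ∑ n, ((a n * y n ^ (-γ-1) * x n) ^ (1/p)) ^ p = T :=
      Finset.sum_congr rfl fun n _ => by
        rw [one_div, Real.rpow_inv_rpow (by have := hx n; have := hy n; have := ha n; positivity) hp0.ne']
    have e2 : ∑ n, ((a n * x n ^ (-γ)) ^ (1/q)) ^ q = Sx :=
      Finset.sum_congr rfl fun n _ => by
        rw [one_div, Real.rpow_inv_rpow (by have := hx n; have := ha n; positivity) hq0.ne']
    have e3 : ∑ n, (a n * y n ^ (-γ-1) * x n) ^ (1/p) * (a n * x n ^ (-γ)) ^ (1/q) = Sy := by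
      refine Finset.sum_congr rfl fun n _ => ?_
      have hxn := hx n; have hyn := hy n; have han := ha n
      have h1 : ((y n) ^ (-γ-1)) ^ (1/p) = y n ^ (-γ) := by
        rw [← Real.rpow_mul hyn.le]
        congr 1
        rw [hp]; field_simp; ring
      have h2 : ((x n) ^ (-γ)) ^ (1/q) = x n ^ (-γ/q) := by
        rw [← Real.rpow_mul hxn.le]; congr 1; ring
      have h3 : x n ^ (1/p) * x n ^ (-γ/q) = 1 := by
        rw [← Real.rpow_add hxn]
        have hz : 1/p + -γ/q = 0 := by rw [hp, hq]; field_simp; ring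
        rw [hz, Real.rpow_zero]
      have h4 : a n ^ (1/p) * a n ^ (1/q) = a n := by
        rw [← Real.rpow_add han, one_div, one_div, hpq.inv_add_inv_eq_one, Real.rpow_one]
      calc (a n * y n ^ (-γ-1) * x n) ^ (1/p) * (a n * x n ^ (-γ)) ^ (1/q)
          = (a n ^ (1/p) * (y n ^ (-γ-1)) ^ (1/p) * x n ^ (1/p)) *
            (a n ^ (1/q) * (x n ^ (-γ)) ^ (1/q)) := by
            rw [Real.mul_rpow (by positivity) hxn.le,
                Real.mul_rpow han.le (by positivity),
                Real.mul_rpow han.le (by positivity)]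
        _ = (a n ^ (1/p) * a n ^ (1/q)) * (y n ^ (-γ-1)) ^ (1/p) *
            (x n ^ (1/p) * x n ^ (-γ/q)) := by rw [h2]; ring
        _ = a n * y n ^ (-γ) := by rw [h4, h1, h3, mul_one]
    rwa [e1, e2, e3] at h
  -- deduce tangent inequality
  have step : Sy ^ p ≤ T * Sx ^ (1/γ) := by
    calc Sy ^ p ≤ (T ^ (1/p) * Sx ^ (1/q)) ^ p :=
          Real.rpow_le_rpow hSypos.le key hp0.le
      _ = T * Sx ^ (1/γ) := by
          rw [Real.mul_rpow (by positivity) (by positivity),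
              one_div, Real.rpow_inv_rpow hTpos.le hp0.ne', ← Real.rpow_mul hSxpos.le]
          congr 1
          rw [hp, hq]; field_simp
  have hA : (0:ℝ) < Sx ^ (1/γ) := Real.rpow_pos_of_pos hSxpos _
  have hB : (0:ℝ) < Sy ^ p := Real.rpow_pos_of_pos hSypos _
  have hexp : -(γ+1)/γ = -p := by rw [hp]; ring
  rw [hexp, neg_div, Real.rpow_neg hSypos.le, Real.rpow_neg hSxpos.le]
  have h1 : (T * Sx ^ (1/γ))⁻¹ ≤ (Sy ^ p)⁻¹ := by
    apply inv_anti₀ hB step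
  calc (Sx ^ (1/γ))⁻¹ = (T * Sx ^ (1/γ))⁻¹ * T := by
        field_simp
    _ ≤ (Sy ^ p)⁻¹ * T := mul_le_mul_of_nonneg_right h1 hTpos.le

private lemma g_concave {γ : ℝ} (hγ : 0 < γ) {N : ℕ} (hN : 0 < N)
    (a R Y : Fin N → ℝ) (ha : ∀ n, 0 < a n) (hR : ∀ n, 0 < R n) (hY : ∀ n, 0 < Y n) :
    ConcaveOn ℝ (Set.Ioi (-(⨅ n, Y n / R n)))
      (fun s => (∑ n, a n * (R n * s + Y n) ^ (-γ)) ^ (-1/γ)) := by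
  haveI : Nonempty (Fin N) := Fin.pos_iff_nonempty.mp hN
  have hbase : ∀ s ∈ Set.Ioi (-(⨅ n, Y n / R n)), ∀ n, 0 < R n * s + Y n := by
    intro s hs n
    have h1 : (⨅ m, Y m / R m) ≤ Y n / R n :=
      ciInf_le (Set.Finite.bddBelow (Set.finite_range _)) n
    have h2 : -(Y n / R n) < s := lt_of_le_of_lt (neg_le_neg h1) hs
    have h3 : R n * -(Y n / R n) < R n * s := mul_lt_mul_of_pos_left h2 (hR n)
    have h4 : R n * (Y n / R n) = Y n := mul_div_cancel₀ _ (hR n).ne'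
    rw [mul_neg, h4] at h3
    linarith
  refine ⟨convex_Ioi _, ?_⟩
  intro u hu v hv α b hα hb hab
  simp only [smul_eq_mul]
  set z := α * u + b * v with hz
  have hzmem : z ∈ Set.Ioi (-(⨅ n, Y n / R n)) := by
    have := (convex_Ioi (-(⨅ n, Y n / R n))) hu hv hα hb hab
    simpa using this
  set Sz := ∑ n, a n * (R n * z + Y n) ^ (-γ) with hSz
  have hSzpos : 0 < Sz :=
    sum_pos'' hN fun n => by have := ha n; have := hbase z hzmem n; positivity
  set K := Sz ^ (-(γ+1)/γ) with hK
  set Tu := ∑ n, a n * (R n * z + Y n) ^ (-γ-1) * (R n * u + Y n) with hTu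
  set Tv := ∑ n, a n * (R n * z + Y n) ^ (-γ-1) * (R n * v + Y n) with hTv
  have tangentu : (∑ n, a n * (R n * u + Y n) ^ (-γ)) ^ (-1/γ) ≤ K * Tu :=
    tangent_le hγ hN a (fun n => R n * u + Y n) (fun n => R n * z + Y n) ha
      (fun n => hbase u hu n) (fun n => hbase z hzmem n)
  have tangentv : (∑ n, a n * (R n * v + Y n) ^ (-γ)) ^ (-1/γ) ≤ K * Tv :=
    tangent_le hγ hN a (fun n => R n * v + Y n) (fun n => R n * z + Y n) ha
      (fun n => hbase v hv n) (fun n => hbase z hzmem n)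
  have hT : α * Tu + b * Tv = Sz := by
    rw [hTu, hTv, Finset.mul_sum, Finset.mul_sum, ← Finset.sum_add_distrib]
    refine Finset.sum_congr rfl fun n _ => ?_
    have hvz := hbase z hzmem n
    have hcomb : α * (R n * u + Y n) + b * (R n * v + Y n) = R n * z + Y n := by
      calc α * (R n * u + Y n) + b * (R n * v + Y n)
          = R n * (α * u + b * v) + (α + b) * Y n := by ring
        _ = R n * z + Y n := by rw [hab, one_mul, hz]
    have hpow : (R n * z + Y n) ^ (-γ-1) * (R n * z + Y n) = (R n * z + Y n) ^ (-γ) := by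
      rw [← Real.rpow_add_one hvz.ne']
      congr 1; ring
    calc α * (a n * (R n * z + Y n) ^ (-γ-1) * (R n * u + Y n))
          + b * (a n * (R n * z + Y n) ^ (-γ-1) * (R n * v + Y n))
        = a n * (R n * z + Y n) ^ (-γ-1) *
            (α * (R n * u + Y n) + b * (R n * v + Y n)) := by ring
      _ = a n * ((R n * z + Y n) ^ (-γ-1) * (R n * z + Y n)) := by rw [hcomb]; ring
      _ = a n * (R n * z + Y n) ^ (-γ) := by rw [hpow]
  have hKS : K * Sz = Sz ^ (-1/γ) := by
    rw [hK, ← Real.rpow_add_one hSzpos.ne']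
    congr 1
    field_simp
    ring
  calc α * (∑ n, a n * (R n * u + Y n) ^ (-γ)) ^ (-1/γ)
        + b * (∑ n, a n * (R n * v + Y n) ^ (-γ)) ^ (-1/γ)
      ≤ α * (K * Tu) + b * (K * Tv) :=
        add_le_add (mul_le_mul_of_nonneg_left tangentu hα)
          (mul_le_mul_of_nonneg_left tangentv hb)
    _ = K * (α * Tu + b * Tv) := by ring
    _ = Sz ^ (-1/γ) := by rw [hT, hKS]

private lemma g_mono {γ : ℝ} (hγ : 0 < γ) {N : ℕ} (hN : 0 < N)
    (a R Y : Fin N → ℝ) (ha : ∀ n, 0 < a n) (hR : ∀ n, 0 < R n)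
    {s₁ s₂ : ℝ} (h₁ : ∀ n, 0 < R n * s₁ + Y n) (h₁₂ : s₁ ≤ s₂) :
    (∑ n, a n * (R n * s₁ + Y n) ^ (-γ)) ^ (-1/γ) ≤
      (∑ n, a n * (R n * s₂ + Y n) ^ (-γ)) ^ (-1/γ) := by
  have h₂ : ∀ n, 0 < R n * s₂ + Y n := fun n => by
    have := h₁ n; nlinarith [hR n]
  have hsum : ∑ n, a n * (R n * s₂ + Y n) ^ (-γ) ≤ ∑ n, a n * (R n * s₁ + Y n) ^ (-γ) := by
    refine Finset.sum_le_sum fun n _ => ?_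
    refine mul_le_mul_of_nonneg_left ?_ (ha n).le
    refine Real.rpow_le_rpow_of_nonpos (h₁ n) ?_ (by linarith)
    nlinarith [hR n]
  have hpos : 0 < ∑ n, a n * (R n * s₂ + Y n) ^ (-γ) :=
    sum_pos'' hN fun n => by have := ha n; have := h₂ n; positivity
  have hexp : -1/γ ≤ 0 := by rw [neg_div]; exact neg_nonpos.mpr (by positivity)
  exact Real.rpow_le_rpow_of_nonpos hpos hsum hexp

/-- for CRRA marginal utility u'(x) = x^(−γ), the function g is concave and
consequently the consumption function is concave. -/
theorem crra_consumption_concave (γ : ℝ) (hγ : 0 < γ)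
    (N : ℕ) (hN : 0 < N)
    (pr β R Y : Fin N → ℝ)
    (hpr : ∀ n, 0 < pr n) (hβ : ∀ n, 0 < β n) (hR : ∀ n, 0 < R n) (hY : ∀ n, 0 < Y n)
    (c : ℝ → ℝ)
    (hc : ∀ w > (0:ℝ), 0 < c w ∧ (∀ n, 0 < R n * (w - c w) + Y n) ∧
      (c w) ^ (-γ) = ∑ n, pr n * β n * R n * (R n * (w - c w) + Y n) ^ (-γ)) :
    ConcaveOn ℝ (Set.Ioi (-(⨅ n, Y n / R n)))
      (fun s => (∑ n, pr n * β n * R n * (R n * s + Y n) ^ (-γ)) ^ (-1/γ)) ∧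
    ConcaveOn ℝ (Set.Ioi 0) c := by
  haveI : Nonempty (Fin N) := Fin.pos_iff_nonempty.mp hN
  set a : Fin N → ℝ := fun n => pr n * β n * R n with haa
  have ha : ∀ n, 0 < a n := fun n => by
    have := hpr n; have := hβ n; have := hR n; positivity
  have hgconc := g_concave hγ hN a R Y ha hR hY
  set g : ℝ → ℝ := fun s => (∑ n, a n * (R n * s + Y n) ^ (-γ)) ^ (-1/γ) with hg
  constructor
  · exact hgconc
  -- membership of savings in the domain
  have hsmem : ∀ w, 0 < w → w - c w ∈ Set.Ioi (-(⨅ n, Y n / R n)) := by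
    intro w hw
    obtain ⟨n₀, hn₀⟩ := exists_eq_ciInf_of_finite (f := fun n => Y n / R n)
    have hpos := (hc w hw).2.1 n₀
    have : -(Y n₀ / R n₀) < w - c w := by
      rw [neg_lt, lt_div_iff₀ (hR n₀)]
      nlinarith [hR n₀]
    simpa [Set.mem_Ioi, hn₀] using this
  -- c w = g (w - c w)
  have hcg : ∀ w, 0 < w → c w = g (w - c w) := by
    intro w hw
    obtain ⟨hcpos, hbase, heuler⟩ := hc w hw
    have hsumpos : 0 < ∑ n, a n * (R n * (w - c w) + Y n) ^ (-γ) :=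
      sum_pos'' hN fun n => by have := ha n; have := hbase n; positivity
    have h1 : ((c w) ^ (-γ)) ^ (-1/γ) = c w := by
      rw [← Real.rpow_mul hcpos.le]
      have he : -γ * (-1/γ) = 1 := by field_simp
      rw [he, Real.rpow_one]
    rw [heuler] at h1
    simp only [hg, haa]
    exact h1.symm
  refine ⟨convex_Ioi 0, ?_⟩
  intro w₁ h₁ w₂ h₂ α b hα hb hab
  simp only [smul_eq_mul]
  have hw₁ : (0:ℝ) < w₁ := h₁
  have hw₂ : (0:ℝ) < w₂ := h₂
  set w := α * w₁ + b * w₂ with hw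
  have hwpos : 0 < w := by
    rcases eq_or_lt_of_le hα with h | h
    · rw [hw, ← h]; simp only [zero_mul, zero_add]
      have : b = 1 := by linarith
      rw [this, one_mul]; exact hw₂
    · nlinarith
  set s₁ := w₁ - c w₁ with hs₁
  set s₂ := w₂ - c w₂ with hs₂
  set cbar := α * c w₁ + b * c w₂ with hcbar
  have hsbar : w - cbar = α * s₁ + b * s₂ := by rw [hw, hcbar, hs₁, hs₂]; ring
  have hsbmem : w - cbar ∈ Set.Ioi (-(⨅ n, Y n / R n)) := by
    rw [hsbar]
    have := hgconc.1 (hsmem w₁ hw₁) (hsmem w₂ hw₂) hα hb hab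
    simpa using this
  have hconc : cbar ≤ g (w - cbar) := by
    have := hgconc.2 (hsmem w₁ hw₁) (hsmem w₂ hw₂) hα hb hab
    simp only [smul_eq_mul] at this
    calc cbar = α * g s₁ + b * g s₂ := by rw [hcbar, hcg w₁ hw₁, hcg w₂ hw₂]
      _ ≤ g (α * s₁ + b * s₂) := this
      _ = g (w - cbar) := by rw [hsbar]
  -- conclude cbar ≤ c w by monotonicity
  by_contra hlt
  push_neg at hlt
  have hle : w - cbar ≤ w - c w := by linarith
  have hbasebar : ∀ n, 0 < R n * (w - cbar) + Y n := by
    intro n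
    have h1 : (⨅ m, Y m / R m) ≤ Y n / R n :=
      ciInf_le (Set.Finite.bddBelow (Set.finite_range _)) n
    have h2 : -(Y n / R n) < w - cbar := lt_of_le_of_lt (neg_le_neg h1) hsbmem
    have h3 : R n * -(Y n / R n) < R n * (w - cbar) := mul_lt_mul_of_pos_left h2 (hR n)
    have h4 : R n * (Y n / R n) = Y n := mul_div_cancel₀ _ (hR n).ne'
    rw [mul_neg, h4] at h3
    linarith
  have hmono : g (w - cbar) ≤ g (w - c w) := g_mono hγ hN a R Y ha hR hbasebar hle
  rw [← hcg w hwpos] at hmono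
  linarith [hconc.trans hmono]
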